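/- Let T : E → F be a positive, order continuous linear operator such that T(u ∧ v) = T(u) ∧ T(v) for all u, v ∈ E with u, v ≥ 0. For x ∈ G with x ≥ 0 set T^t(x) = sup{T(z) : z ∈ E, 0 ≤ z ≤ x} (this supremum exists in F). Then T^t(x ∧ y) = T^t(x) ∧ T^t(y) for all x, y ∈ G with x, y ≥ 0. -/

import Mathlib

/-- In a lattice-ordered commutative group, if `s` is a LUB of `S` and `b`
bounds `a ⊓ c` for all `a ∈ S`, then `s ⊓ c ≤ b`. -/
lemma stmt15_aux {F : Type*} [Lattice F] [AddCommGroup F]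
    [CovariantClass F F (· + ·) (· ≤ ·)]
    {S : Set F} {s c b : F} (hs : IsLUB S s) (hb : ∀ a ∈ S, a ⊓ c ≤ b) :
    s ⊓ c ≤ b := by
  have e : s ⊓ c = s + c - (s ⊔ c) := eq_sub_of_add_eq (inf_add_sup s c)
  rw [e, sub_le_iff_le_add]
  have hs' : s ≤ (b + (s ⊔ c)) - c := by
    apply hs.2
    intro a ha
    rw [le_sub_iff_add_le]
    calc a + c = a ⊓ c + (a ⊔ c) := (inf_add_sup a c).symm
      _ ≤ b + (s ⊔ c) := add_le_add (hb a ha) (sup_le_sup_right (hs.1 ha) c)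
  calc s + c ≤ ((b + (s ⊔ c)) - c) + c := add_le_add hs' le_rfl
    _ = b + (s ⊔ c) := sub_add_cancel _ _

theorem stmt15
    {G : Type*} [Lattice G] [AddCommGroup G] [Module ℝ G]
    [CovariantClass G G (· + ·) (· ≤ ·)] [PosSMulMono ℝ G]
    (arch : ∀ x y : G, (∀ n : ℕ, n • x ≤ y) → x ≤ 0)
    (E : Set G)
    (hE0 : (0 : G) ∈ E)
    (hEadd : ∀ x ∈ E, ∀ y ∈ E, x + y ∈ E)
    (hEsmul : ∀ (c : ℝ), ∀ x ∈ E, c • x ∈ E)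
    (hEsup : ∀ x ∈ E, ∀ y ∈ E, x ⊔ y ∈ E)
    (hEinf : ∀ x ∈ E, ∀ y ∈ E, x ⊓ y ∈ E)
    (hdense : ∀ x : G, 0 < x → ∃ y ∈ E, 0 < y ∧ y ≤ x)
    (hmaj : ∀ x : G, ∃ y ∈ E, x ≤ y)
    {F : Type*} [ConditionallyCompleteLattice F] [AddCommGroup F] [Module ℝ F]
    [CovariantClass F F (· + ·) (· ≤ ·)] [PosSMulMono ℝ F]
    (T : G → F)
    (hT_add : ∀ x ∈ E, ∀ y ∈ E, T (x + y) = T x + T y)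
    (hT_smul : ∀ (c : ℝ), ∀ x ∈ E, T (c • x) = c • T x)
    (hT_pos : ∀ x ∈ E, 0 ≤ x → 0 ≤ T x)
    (hT_oc : ∀ D : Set G, D.Nonempty → D ⊆ E → DirectedOn (· ≥ ·) D →
      IsGLB D 0 → IsGLB (T '' D) 0)
    (hT_latt : ∀ u ∈ E, ∀ v ∈ E, 0 ≤ u → 0 ≤ v → T (u ⊓ v) = T u ⊓ T v) :
    (∀ x : G, 0 ≤ x → ∃ v : F, IsLUB (T '' {z | z ∈ E ∧ 0 ≤ z ∧ z ≤ x}) v) ∧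
    (∀ x y : G, 0 ≤ x → 0 ≤ y →
      sSup (T '' {z | z ∈ E ∧ 0 ≤ z ∧ z ≤ x ⊓ y}) =
        sSup (T '' {z | z ∈ E ∧ 0 ≤ z ∧ z ≤ x}) ⊓
        sSup (T '' {z | z ∈ E ∧ 0 ≤ z ∧ z ≤ y})) := by
  -- T is monotone on E
  have hmono : ∀ u ∈ E, ∀ v ∈ E, u ≤ v → T u ≤ T v := by
    intro u hu v hv huv
    have hsub : v - u ∈ E := by
      have := hEadd v hv _ (hEsmul (-1) u hu)
      rw [neg_one_smul] at this
      rwa [sub_eq_add_neg]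
    have h0 : (0 : G) ≤ v - u := sub_nonneg.2 huv
    have hTv : T v = T u + T (v - u) := by
      have := hT_add u hu (v - u) hsub
      rw [add_sub_cancel] at this
      exact this
    rw [hTv]
    exact le_add_of_nonneg_right (hT_pos _ hsub h0)
  have hlub : ∀ x : G, 0 ≤ x →
      IsLUB (T '' {z | z ∈ E ∧ 0 ≤ z ∧ z ≤ x})
        (sSup (T '' {z | z ∈ E ∧ 0 ≤ z ∧ z ≤ x})) := by
    intro x hx
    obtain ⟨y, hyE, hxy⟩ := hmaj x
    have hne : (T '' {z | z ∈ E ∧ 0 ≤ z ∧ z ≤ x}).Nonempty :=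
      ⟨T 0, ⟨0, ⟨hE0, le_refl 0, hx⟩, rfl⟩⟩
    have hbdd : BddAbove (T '' {z | z ∈ E ∧ 0 ≤ z ∧ z ≤ x}) := by
      refine ⟨T y, ?_⟩
      rintro a ⟨z, ⟨hzE, hz0, hzx⟩, rfl⟩
      exact hmono z hzE y hyE (hzx.trans hxy)
    exact isLUB_csSup hne hbdd
  refine ⟨fun x hx => ⟨_, hlub x hx⟩, fun x y hx hy => ?_⟩
  have hA := hlub (x ⊓ y) (le_inf hx hy)
  have hB := hlub x hx
  have hC := hlub y hy
  apply le_antisymm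
  · apply le_inf
    · apply hA.2
      rintro a ⟨z, ⟨hzE, hz0, hzxy⟩, rfl⟩
      exact hB.1 ⟨z, ⟨hzE, hz0, hzxy.trans inf_le_left⟩, rfl⟩
    · apply hA.2
      rintro a ⟨z, ⟨hzE, hz0, hzxy⟩, rfl⟩
      exact hC.1 ⟨z, ⟨hzE, hz0, hzxy.trans inf_le_right⟩, rfl⟩
  · have key : ∀ v ∈ E, 0 ≤ v → v ≤ y →
        sSup (T '' {z | z ∈ E ∧ 0 ≤ z ∧ z ≤ x}) ⊓ T v ≤
          sSup (T '' {z | z ∈ E ∧ 0 ≤ z ∧ z ≤ x ⊓ y}) := by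
      intro v hvE hv0 hvy
      apply stmt15_aux hB
      rintro a ⟨u, ⟨huE, hu0, hux⟩, rfl⟩
      rw [← hT_latt u huE v hvE hu0 hv0]
      exact hA.1 ⟨u ⊓ v, ⟨hEinf u huE v hvE, le_inf hu0 hv0, inf_le_inf hux hvy⟩, rfl⟩
    have h2 : sSup (T '' {z | z ∈ E ∧ 0 ≤ z ∧ z ≤ y}) ⊓
        sSup (T '' {z | z ∈ E ∧ 0 ≤ z ∧ z ≤ x}) ≤
        sSup (T '' {z | z ∈ E ∧ 0 ≤ z ∧ z ≤ x ⊓ y}) := by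
      apply stmt15_aux hC
      rintro a ⟨v, ⟨hvE, hv0, hvy⟩, rfl⟩
      rw [inf_comm]
      exact key v hvE hv0 hvy
    rw [inf_comm]
    exact h2
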